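/- If I is a countable strongly annihilated ideal of a commutative ring R and r ∈ R \ I, then (I : r) is a countable strongly annihilated ideal. -/
import Mathlib


/-- An ideal `I` is countable strongly annihilated if for each countable subset `S ⊆ I`
and each `b ∉ I` there exists `c` with `c * a = 0` for all `a ∈ S` but `c * b ≠ 0`. -/
def CountableStronglyAnnihilated {R : Type*} [CommRing R] (I : Ideal R) : Prop :=
  ∀ S : Set R, S.Countable → S ⊆ I → ∀ b ∉ I, ∃ c : R, (∀ a ∈ S, c * a = 0) ∧ c * b ≠ 0

theorem stmt2 {R : Type*} [CommRing R] (I : Ideal R) (r : R)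
    (hI : CountableStronglyAnnihilated I) (hr : r ∉ I) :
    CountableStronglyAnnihilated (I.colon (Ideal.span {r})) := by
  intro S hS hSsub b hb
  have hbr : b * r ∉ I := fun h => hb (Ideal.mem_colon_span_singleton.mpr h)
  obtain ⟨c, hc1, hc2⟩ := hI ((· * r) '' S) (hS.image _)
    (by rintro _ ⟨a, ha, rfl⟩; exact Ideal.mem_colon_span_singleton.mp (hSsub ha))
    (b * r) hbr
  refine ⟨c * r, fun a ha => ?_, fun h => hc2 ?_⟩
  · have := hc1 (a * r) ⟨a, ha, rfl⟩
    ring_nf at this ⊢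
    linear_combination this
  · linear_combination h
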